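/- Suppose L is a real linear Hamiltonian map on a symplectic space (V,ω), S is a linear involution with SL = LS and ω(Sx,Sy) = −ω(x,y), and L has eigenvalues ±i. Then any S-invariant, L-invariant symplectic subspace W ⊆ V on which L has eigenvalues exactly ±i and on which L equals the complex structure determined by ω cannot be 2-dimensional; equivalently, the minimal (L,J,S)-invariant subspace containing an eigenvector for eigenvalue i has dimension 4. -/

import Mathlib

/-- Lemma 3.1(ii), dimension count: if `S` is an anti-symplectic
linear involution commuting with a linear Hamiltonian map `L`, then an
`S`-invariant, `L`-invariant symplectic subspace `W` on which `L` coincides with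
the complex structure `J` cannot be 2-dimensional. -/
theorem stmt12 (m : ℕ)
    (J S L : EuclideanSpace ℝ (Fin m) →ₗ[ℝ] EuclideanSpace ℝ (Fin m))
    (ω : EuclideanSpace ℝ (Fin m) → EuclideanSpace ℝ (Fin m) → ℝ)
    (hω : ∀ x y, ω x y = inner ℝ x (J y))
    (hJsq : ∀ x, J (J x) = -x)
    (hJskew : ∀ x y, (inner ℝ (J x) y : ℝ) = -(inner ℝ x (J y) : ℝ))
    (hSinv : ∀ x, S (S x) = x)
    (hSiso : ∀ x y, (inner ℝ (S x) (S y) : ℝ) = inner ℝ x y)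
    (hSanti : ∀ x y, ω (S x) (S y) = -ω x y)
    (hLham : ∀ x y, ω (L x) y + ω x (L y) = 0)
    (hSL : ∀ x, S (L x) = L (S x))
    (W : Submodule ℝ (EuclideanSpace ℝ (Fin m)))
    (hSW : ∀ w ∈ W, S w ∈ W)
    (hLW : ∀ w ∈ W, L w ∈ W)
    (hLJ : ∀ w ∈ W, L w = J w)
    (hWsymp : ∀ w ∈ W, w ≠ 0 → ∃ w' ∈ W, ω w w' ≠ 0) :
    Module.finrank ℝ W ≠ 2 := by
  -- ω vanishes identically on W × W
  have hzero : ∀ w ∈ W, ∀ w' ∈ W, ω w w' = 0 := by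
    intro w hw w' hw'
    have hJS : J (S w') = S (J w') := by
      rw [← hLJ (S w') (hSW w' hw'), ← hSL, hLJ w' hw']
    have h1 : ω (S w) (S w') = ω w w' := by
      rw [hω, hω, hJS, hSiso]
    have h2 := hSanti w w'
    linarith [h1, h2]
  -- hence W = ⊥
  have hW : W = ⊥ := by
    rw [Submodule.eq_bot_iff]
    intro w hw
    by_contra hne
    obtain ⟨w', hw', hne'⟩ := hWsymp w hw hne
    exact hne' (hzero w hw w' hw')
  rw [hW]
  simp
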